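/- A codeword χ ∈ S^♮ satisfies χ_1 + χ_2 = 0 (i.e., χ is orthogonal to the weight-2 word (1,1,0,...,0)) if and only if χ_{2i-1} = χ_{2i} for every i = 1,...,24; that is, the subcode S_Λ = ⟨(1,1,0^46)⟩^⊥ ∩ S^♮ consists exactly of the codewords of S^♮ that are constant on each of the 24 pairs {2i-1, 2i}. -/

import Mathlib

/-- The all-ones word `(1^16)`. -/
def w16All : Fin 16 → ZMod 2 := fun _ => 1

/-- The word `(0^8 1^8)`. -/
def w16Half : Fin 16 → ZMod 2 := fun i => if 8 ≤ i.val then 1 else 0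

/-- The word `(0^4 1^4 0^4 1^4)`. -/
def w16Quarter : Fin 16 → ZMod 2 := fun i => if 4 ≤ i.val % 8 then 1 else 0

/-- The word `(0^2 1^2)` repeated 4 times. -/
def w16Eighth : Fin 16 → ZMod 2 := fun i => if 2 ≤ i.val % 4 then 1 else 0

/-- The word `(01)` repeated 8 times. -/
def w16Alt : Fin 16 → ZMod 2 := fun i => if 1 ≤ i.val % 2 then 1 else 0

/-- The code `S_{E8}`: the binary linear code of length 16 spanned by
`(1^16)`, `(0^8 1^8)`, `(0^4 1^4 0^4 1^4)`, `((0^2 1^2)^4)` and `((01)^8)`. -/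
def SE8 : Submodule (ZMod 2) (Fin 16 → ZMod 2) :=
  Submodule.span (ZMod 2) {w16All, w16Half, w16Quarter, w16Eighth, w16Alt}

/-- The word of length 48 which is `1` exactly on the `b`-th block of 16
coordinates (so `blockOnes 0 = (1^16,0^16,0^16)` etc.). -/
def blockOnes (b : ℕ) : Fin 48 → ZMod 2 := fun j => if j.val / 16 = b then 1 else 0

/-- The length-48 word `(α, α, α)` repeating a length-16 word `α` on each of the
three blocks. -/
def tripleRep (α : Fin 16 → ZMod 2) : Fin 48 → ZMod 2 :=
  fun j => α ⟨j.val % 16, Nat.mod_lt _ (by norm_num)⟩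

/-- The moonshine code `S^♮`: the binary linear code of length 48 spanned by
`(1^16,0^16,0^16)`, `(0^16,1^16,0^16)`, `(0^16,0^16,1^16)` and all `(α,α,α)`
with `α ∈ S_{E8}`. -/
def Snat : Submodule (ZMod 2) (Fin 48 → ZMod 2) :=
  Submodule.span (ZMod 2)
    ({blockOnes 0, blockOnes 1, blockOnes 2} ∪ {w | ∃ α ∈ SE8, w = tripleRep α})


/-- Auxiliary predicate: pair-sums all equal the first pair-sum (length 16). -/
def P16 (α : Fin 16 → ZMod 2) : Prop :=
  ∀ k : Fin 8, α ⟨2 * k.val, by omega⟩ + α ⟨2 * k.val + 1, by omega⟩ = α 0 + α 1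

instance : DecidablePred P16 := fun α => by unfold P16; infer_instance

/-- Auxiliary predicate: pair-sums all equal the first pair-sum (length 48). -/
def P48 (χ : Fin 48 → ZMod 2) : Prop :=
  ∀ i : Fin 24, χ ⟨2 * i.val, by have := i.isLt; omega⟩ + χ ⟨2 * i.val + 1, by have := i.isLt; omega⟩ = χ 0 + χ 1

instance : DecidablePred P48 := fun χ => by unfold P48; infer_instance

def M16 : Submodule (ZMod 2) (Fin 16 → ZMod 2) where
  carrier := {α | P16 α}
  zero_mem' := by intro k; simp
  add_mem' := by
    intro a b ha hb k
    have h1 := ha k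
    have h2 := hb k
    simp only [Pi.add_apply]
    linear_combination h1 + h2
  smul_mem' := by
    intro c a ha k
    have h1 := ha k
    simp only [Pi.smul_apply, smul_eq_mul]
    linear_combination c * h1

def M48 : Submodule (ZMod 2) (Fin 48 → ZMod 2) where
  carrier := {χ | P48 χ}
  zero_mem' := by intro k; simp
  add_mem' := by
    intro a b ha hb k
    have h1 := ha k
    have h2 := hb k
    simp only [Pi.add_apply]
    linear_combination h1 + h2
  smul_mem' := by
    intro c a ha k
    have h1 := ha k
    simp only [Pi.smul_apply, smul_eq_mul]
    linear_combination c * h1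

lemma SE8_le_M16 : SE8 ≤ M16 := by
  rw [SE8, Submodule.span_le]
  rintro w hw
  simp only [Set.mem_insert_iff, Set.mem_singleton_iff] at hw
  rcases hw with rfl | rfl | rfl | rfl | rfl <;> · show P16 _; decide

lemma Snat_le_M48 : Snat ≤ M48 := by
  rw [Snat, Submodule.span_le]
  rintro w hw
  rcases hw with hw | ⟨α, hα, rfl⟩
  · simp only [Set.mem_insert_iff, Set.mem_singleton_iff] at hw
    rcases hw with rfl | rfl | rfl <;> · show P48 _; decide
  · have hP : P16 α := SE8_le_M16 hα
    intro i
    show α ⟨(2 * i.val) % 16, _⟩ + α ⟨(2 * i.val + 1) % 16, _⟩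
        = α ⟨(0 : Fin 48).val % 16, _⟩ + α ⟨(1 : Fin 48).val % 16, _⟩
    have e1 : (2 * i.val) % 16 = 2 * (i.val % 8) := by omega
    have e2 : (2 * i.val + 1) % 16 = 2 * (i.val % 8) + 1 := by omega
    simp only [e1, e2]
    have h := hP ⟨i.val % 8, by omega⟩
    exact h

/-- A codeword `χ ∈ S^♮` satisfies `χ₁ + χ₂ = 0` (i.e. `χ` is orthogonal to the
weight-2 word `(1,1,0,…,0)`) if and only if `χ` is constant on each of the 24
pairs `{2i-1, 2i}` of coordinates; hence `S_Λ = ⟨(1,1,0^46)⟩^⊥ ∩ S^♮` consists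
exactly of the codewords of `S^♮` that are constant on each pair. -/

theorem Snat_pair_constant_iff (χ : Fin 48 → ZMod 2) (hχ : χ ∈ Snat) :
    χ 0 + χ 1 = 0 ↔
      ∀ i : Fin 24, χ ⟨2 * i.val, by omega⟩ = χ ⟨2 * i.val + 1, by omega⟩ := by
  have hP : P48 χ := Snat_le_M48 hχ
  have key : ∀ a b : ZMod 2, a + b = 0 ↔ a = b := by decide
  constructor
  · intro h0 i
    have := hP i
    rw [h0] at this
    exact (key _ _).mp this
  · intro h
    have h0 := h 0
    have : χ ⟨0, by omega⟩ = χ ⟨1, by omega⟩ := h0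
    exact (key _ _).mpr this
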